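/- Let μ < 0 and let K : D \ {0} → (μ, -2μ) satisfy, on a punctured disk, the equation log(-2μ-K(z)) - log(K(z)-μ) - 3μ/(K(z)-μ) = (2λ/Λ)·log|z| + h(z), where λ > 0, Λ < 0 are reals and h is a bounded continuous function on D \ {0}. Then lim_{z→0} K(z) = μ. -/

import Mathlib

open Filter

/-- If `μ < 0`, `K` takes values in `(μ,-2μ)` on a punctured disk and satisfies
`log(-2μ-K) - log(K-μ) - 3μ/(K-μ) = (2λ/Λ)log|z| + h(z)` with `λ > 0`, `Λ < 0`
and `h` bounded and continuous on the punctured disk, then `K(z) → μ` as `z → 0`. -/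
theorem stmt_18 (μ : ℝ) (hμ : μ < 0) (r : ℝ) (hr : 0 < r)
    (K : ℂ → ℝ) (h : ℂ → ℝ) (l Λ : ℝ) (hl : 0 < l) (hΛ : Λ < 0)
    (hKrange : ∀ z ∈ Metric.ball (0:ℂ) r \ {0}, K z ∈ Set.Ioo μ (-2*μ))
    (hh_cont : ContinuousOn h (Metric.ball (0:ℂ) r \ {0}))
    (hh_bdd : ∃ M : ℝ, ∀ z ∈ Metric.ball (0:ℂ) r \ {0}, |h z| ≤ M)
    (heq : ∀ z ∈ Metric.ball (0:ℂ) r \ {0},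
      Real.log (-2*μ - K z) - Real.log (K z - μ) - 3*μ/(K z - μ)
        = (2*l/Λ) * Real.log ‖z‖ + h z) :
    Tendsto K (nhdsWithin 0 (Metric.ball (0:ℂ) r \ {0})) (nhds μ) := by
  obtain ⟨M, hM⟩ := hh_bdd
  rw [Metric.tendsto_nhdsWithin_nhds]
  intro ε hε
  set C : ℝ := Real.log (-3*μ) - Real.log ε + (-3*μ)/ε with hC
  refine ⟨min r (Real.exp ((C + M) * Λ / (2*l))), lt_min hr (Real.exp_pos _), ?_⟩
  intro z hz hdist
  have hz0 : z ≠ 0 := hz.2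
  have habs : 0 < ‖z‖ := by
    simpa using norm_pos_iff.mpr hz0
  have hdz : dist z 0 = ‖z‖ := by
    simp [Complex.dist_eq]
  have hΛ0 : Λ ≠ 0 := ne_of_lt hΛ
  have hl0 : l ≠ 0 := ne_of_gt hl
  have hlog : Real.log ‖z‖ < (C + M) * Λ / (2*l) := by
    have hlt : ‖z‖ < Real.exp ((C + M) * Λ / (2*l)) :=
      lt_of_lt_of_le (hdz ▸ hdist) (min_le_right _ _)
    have := Real.log_lt_log habs hlt
    rwa [Real.log_exp] at this
  have hneg : 2*l/Λ < 0 := div_neg_of_pos_of_neg (by linarith) hΛ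
  have hkey : C + M < (2*l/Λ) * Real.log ‖z‖ := by
    have h1 := mul_lt_mul_of_neg_left hlog hneg
    have h2 : (2*l/Λ) * ((C + M) * Λ / (2*l)) = C + M := by
      field_simp
    linarith
  obtain ⟨hK1, hK2⟩ := hKrange z hz
  have hdK : dist (K z) μ = K z - μ := by
    rw [Real.dist_eq, abs_of_pos (by linarith)]
  rw [hdK]
  by_contra hcon
  push_neg at hcon
  -- so ε ≤ K z - μ
  have hεK : ε ≤ K z - μ := hcon
  have ht1 : Real.log (-2*μ - K z) ≤ Real.log (-3*μ) := by
    apply Real.log_le_log (by linarith) (by linarith)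
  have ht2 : Real.log ε ≤ Real.log (K z - μ) :=
    Real.log_le_log hε hεK
  have ht3 : (-3*μ)/(K z - μ) ≤ (-3*μ)/ε :=
    div_le_div_of_nonneg_left (by linarith) hε hεK
  have e1 : -(3*μ/(K z - μ)) = (-3*μ)/(K z - μ) := by ring
  have hEq := heq z hz
  have hhz := hM z hz
  have hhz' : -M ≤ h z := by
    have := abs_le.mp hhz
    linarith [this.1]
  linarith
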